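/- arXiv:2503.19896 — 3 statements merged into one kernel-verified Lean document; each statement's English description precedes it below -/
import Mathlib

section
/- Let Z and S be random variables on a common finite probability space, with S taking values in a finite set 𝓢, and let f : 𝓢 → 𝓜 be a function into a finite set 𝓜. Suppose that for every s ∈ 𝓢 for which there exists s' ≠ s with f(s') = f(s), one has P(S = s | Z = z) = P(S = s) for every z with P(Z = z) > 0. Then I(Z; f∘S) = I(Z; S). (This is the classical content of the reverse direction of Result 2: if every memory state that gets merged by the encoding carries no information about the record Z, then merging loses no mutual information and the compressed agent attains the same work cost.) -/
open Finset

/-- Probability that the random variable `A` (on the finite probability space with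
probability mass function `μ`) takes the value `a`. -/
noncomputable def prb {Ω : Type*} [Fintype Ω] (μ : Ω → ℝ) {α : Type*} [DecidableEq α]
    (A : Ω → α) (a : α) : ℝ :=
  ∑ ω, if A ω = a then μ ω else 0

/-- Shannon entropy (in bits) of the random variable `A`. -/
noncomputable def entH {Ω : Type*} [Fintype Ω] (μ : Ω → ℝ) {α : Type*} [Fintype α]
    [DecidableEq α] (A : Ω → α) : ℝ :=
  -∑ a, prb μ A a * Real.logb 2 (prb μ A a)

/-- Mutual information `I(A;B) = H(A) + H(B) - H(A,B)` (in bits). -/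
noncomputable def mutInf {Ω : Type*} [Fintype Ω] (μ : Ω → ℝ) {α β : Type*}
    [Fintype α] [DecidableEq α] [Fintype β] [DecidableEq β] (A : Ω → α) (B : Ω → β) : ℝ :=
  entH μ A + entH μ B - entH μ (fun ω => (A ω, B ω))

/-- Conditional probability `P(A = a | B = b)`. -/
noncomputable def condPrb {Ω : Type*} [Fintype Ω] (μ : Ω → ℝ) {α β : Type*}
    [DecidableEq α] [DecidableEq β] (A : Ω → α) (B : Ω → β) (a : α) (b : β) : ℝ :=
  prb μ (fun ω => (A ω, B ω)) (a, b) / prb μ B b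

section Aux

variable {Ω : Type*} [Fintype Ω] {μ : Ω → ℝ}

lemma aux_prb_nonneg (hμ : ∀ ω, 0 ≤ μ ω) {α : Type*} [DecidableEq α] (A : Ω → α) (a : α) :
    0 ≤ prb μ A a :=
  Finset.sum_nonneg fun ω _ => by split <;> simp [hμ ω]

lemma aux_prb_sum_eq_one (hμ1 : ∑ ω, μ ω = 1) {α : Type*} [Fintype α] [DecidableEq α]
    (A : Ω → α) : ∑ a, prb μ A a = 1 := by
  unfold prb
  rw [Finset.sum_comm]
  simpa using hμ1

lemma aux_joint_le_fst (hμ : ∀ ω, 0 ≤ μ ω) {𝒵 𝓢 : Type*} [DecidableEq 𝒵] [DecidableEq 𝓢]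
    (Z : Ω → 𝒵) (S : Ω → 𝓢) (z : 𝒵) (s : 𝓢) :
    prb μ (fun ω => (Z ω, S ω)) (z, s) ≤ prb μ Z z := by
  refine Finset.sum_le_sum fun ω _ => ?_
  dsimp
  split_ifs with h1 h2
  · exact le_refl _
  · exact absurd (Prod.ext_iff.mp h1).1 h2
  · exact hμ ω
  · exact le_refl _

lemma aux_prb_comp {𝓢 𝓜 : Type*} [Fintype 𝓢] [DecidableEq 𝓢] [DecidableEq 𝓜]
    (S : Ω → 𝓢) (f : 𝓢 → 𝓜) (m : 𝓜) :
    prb μ (fun ω => f (S ω)) m = ∑ s ∈ Finset.univ.filter (fun s => f s = m), prb μ S s := by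
  unfold prb
  rw [Finset.sum_comm]
  refine Finset.sum_congr rfl fun ω _ => ?_
  rw [Finset.sum_filter]
  have hpt : ∀ x : 𝓢, (if f x = m then if S ω = x then μ ω else 0 else 0)
      = if x = S ω then (if f (S ω) = m then μ ω else 0) else 0 := by
    intro x
    by_cases h : S ω = x
    · subst h; simp
    · simp [h, Ne.symm h]
  rw [Finset.sum_congr rfl fun x _ => hpt x, Finset.sum_ite_eq' Finset.univ (S ω)]
  simp

lemma aux_prb_comp_joint {𝒵 𝓢 𝓜 : Type*} [Fintype 𝓢] [DecidableEq 𝓢] [DecidableEq 𝓜]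
    [DecidableEq 𝒵] (Z : Ω → 𝒵) (S : Ω → 𝓢) (f : 𝓢 → 𝓜) (z : 𝒵) (m : 𝓜) :
    prb μ (fun ω => (Z ω, f (S ω))) (z, m)
      = ∑ s ∈ Finset.univ.filter (fun s => f s = m), prb μ (fun ω => (Z ω, S ω)) (z, s) := by
  unfold prb
  rw [Finset.sum_comm]
  refine Finset.sum_congr rfl fun ω _ => ?_
  rw [Finset.sum_filter]
  have hpt : ∀ x : 𝓢, (if f x = m then if (Z ω, S ω) = (z, x) then μ ω else 0 else 0)
      = if x = S ω then (if (Z ω, f (S ω)) = (z, m) then μ ω else 0) else 0 := by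
    intro x
    by_cases h : S ω = x
    · subst h
      by_cases hf : f (S ω) = m <;> by_cases hz : Z ω = z <;>
        simp [hf, hz, Prod.ext_iff]
    · simp [Prod.ext_iff, h, Ne.symm h]
  rw [Finset.sum_congr rfl fun x _ => hpt x, Finset.sum_ite_eq' Finset.univ (S ω)]
  simp

lemma aux_mul_logb_mul (x y : ℝ) :
    x * y * Real.logb 2 (x * y) = x * y * Real.logb 2 x + x * y * Real.logb 2 y := by
  rcases eq_or_ne x 0 with h | h
  · simp [h]
  rcases eq_or_ne y 0 with h' | h'
  · simp [h']
  rw [Real.logb_mul h h']; ring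

end Aux

/-- If every state `s` that is merged by the encoding `f` (i.e. shares its `f`-value
with some other state) carries no information about the record `Z` — that is,
`P(S=s|Z=z) = P(S=s)` for all `z` with `P(Z=z) > 0` — then merging loses no mutual
information: `I(Z; f∘S) = I(Z; S)`. -/
theorem mutInf_comp_eq_of_merged_states_uninformative
    {Ω 𝒵 𝓢 𝓜 : Type*} [Fintype Ω] [Fintype 𝒵] [DecidableEq 𝒵]
    [Fintype 𝓢] [DecidableEq 𝓢] [Fintype 𝓜] [DecidableEq 𝓜]
    (μ : Ω → ℝ) (hμ : ∀ ω, 0 ≤ μ ω) (hμ1 : ∑ ω, μ ω = 1)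
    (Z : Ω → 𝒵) (S : Ω → 𝓢) (f : 𝓢 → 𝓜)
    (hmerged : ∀ s : 𝓢, (∃ s' : 𝓢, s' ≠ s ∧ f s' = f s) →
      ∀ z : 𝒵, 0 < prb μ Z z → condPrb μ S Z s z = prb μ S s) :
    mutInf μ Z (fun ω => f (S ω)) = mutInf μ Z S := by
  classical
  -- abbreviations
  set pZ : 𝒵 → ℝ := prb μ Z with hpZdef
  set pS : 𝓢 → ℝ := prb μ S with hpSdef
  set pJ : 𝒵 → 𝓢 → ℝ := fun z s => prb μ (fun ω => (Z ω, S ω)) (z, s) with hpJdef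
  set pM : 𝓜 → ℝ := fun m => prb μ (fun ω => f (S ω)) m with hpMdef
  set qJ : 𝒵 → 𝓜 → ℝ := fun z m => prb μ (fun ω => (Z ω, f (S ω))) (z, m) with hqJdef
  have hsumZ : ∑ z, pZ z = 1 := aux_prb_sum_eq_one hμ1 Z
  -- independence for merged states
  have hindep : ∀ s : 𝓢, (∃ s' : 𝓢, s' ≠ s ∧ f s' = f s) → ∀ z, pJ z s = pZ z * pS s := by
    intro s hs z
    rcases (aux_prb_nonneg hμ Z z).lt_or_eq with h | h
    · have hc := hmerged s hs z h
      unfold condPrb at hc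
      have h2 := (div_eq_iff h.ne').mp hc
      have h3 : prb μ (fun ω => (Z ω, S ω)) (z, s) = prb μ S s * prb μ Z z := by
        rw [← h2]
        unfold prb
        exact Finset.sum_congr rfl fun ω _ => by simp [Prod.ext_iff, and_comm]
      simp only [hpJdef, hpZdef, hpSdef]
      rw [h3]; ring
    · have h0 : pZ z = 0 := h.symm
      have hle : pJ z s ≤ pZ z := aux_joint_le_fst hμ Z S z s
      have hge : 0 ≤ pJ z s := aux_prb_nonneg hμ _ _
      rw [h0, zero_mul]
      linarith
  set L : ℝ := ∑ z, pZ z * Real.logb 2 (pZ z) with hLdef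
  -- key per-fiber identity
  have key : ∀ m : 𝓜,
      (∑ z, qJ z m * Real.logb 2 (qJ z m)) - pM m * Real.logb 2 (pM m)
        = ∑ s ∈ Finset.univ.filter (fun s => f s = m),
            ((∑ z, pJ z s * Real.logb 2 (pJ z s)) - pS s * Real.logb 2 (pS s)) := by
    intro m
    set T := Finset.univ.filter (fun s : 𝓢 => f s = m) with hTdef
    have hMm : pM m = ∑ s ∈ T, pS s := aux_prb_comp S f m
    have hqm : ∀ z, qJ z m = ∑ s ∈ T, pJ z s := fun z => aux_prb_comp_joint Z S f z m
    rcases lt_or_ge T.card 2 with hcard | hcard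
    · interval_cases h : T.card
      · -- empty fiber
        have hTe : T = ∅ := Finset.card_eq_zero.mp h
        simp [hTe, hqm, hMm]
      · -- singleton fiber
        obtain ⟨s₀, hs₀⟩ := Finset.card_eq_one.mp h
        simp [hs₀, hqm, hMm]
    · -- all states in the fiber are merged
      have hmg : ∀ s ∈ T, ∀ z, pJ z s = pZ z * pS s := by
        intro s hsT z
        refine hindep s ?_ z
        obtain ⟨s', hs'T, hne⟩ := Finset.exists_mem_ne (s := T) (by omega) s
        have hfs : f s = m := (Finset.mem_filter.mp hsT).2
        have hfs' : f s' = m := (Finset.mem_filter.mp hs'T).2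
        exact ⟨s', hne, by rw [hfs, hfs']⟩
      have hq : ∀ z, qJ z m = pZ z * pM m := by
        intro z
        rw [hqm z, hMm, Finset.mul_sum]
        exact Finset.sum_congr rfl fun s hs => hmg s hs z
      have lhs_eq : (∑ z, qJ z m * Real.logb 2 (qJ z m)) - pM m * Real.logb 2 (pM m)
          = pM m * L := by
        have : ∀ z, qJ z m * Real.logb 2 (qJ z m)
            = pM m * (pZ z * Real.logb 2 (pZ z)) + (pM m * Real.logb 2 (pM m)) * pZ z := by
          intro z
          rw [hq z, aux_mul_logb_mul]
          ring
        rw [Finset.sum_congr rfl fun z _ => this z, Finset.sum_add_distrib,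
          ← Finset.mul_sum, ← Finset.mul_sum, hsumZ]
        ring
      have rhs_eq : ∀ s ∈ T,
          (∑ z, pJ z s * Real.logb 2 (pJ z s)) - pS s * Real.logb 2 (pS s) = pS s * L := by
        intro s hsT
        have : ∀ z, pJ z s * Real.logb 2 (pJ z s)
            = pS s * (pZ z * Real.logb 2 (pZ z)) + (pS s * Real.logb 2 (pS s)) * pZ z := by
          intro z
          rw [hmg s hsT z, aux_mul_logb_mul]
          ring
        rw [Finset.sum_congr rfl fun z _ => this z, Finset.sum_add_distrib,
          ← Finset.mul_sum, ← Finset.mul_sum, hsumZ]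
        ring
      rw [lhs_eq, Finset.sum_congr rfl rhs_eq, ← Finset.sum_mul, ← hMm]
  -- sum the key identity over all m
  have h1 : ∀ (F : 𝓢 → ℝ),
      ∑ m, ∑ s ∈ Finset.univ.filter (fun s => f s = m), F s = ∑ s, F s := by
    intro F
    simp only [Finset.sum_filter]
    rw [Finset.sum_comm]
    simp
  have total :
      (∑ z, ∑ m, qJ z m * Real.logb 2 (qJ z m)) - ∑ m, pM m * Real.logb 2 (pM m)
        = (∑ z, ∑ s, pJ z s * Real.logb 2 (pJ z s)) - ∑ s, pS s * Real.logb 2 (pS s) := by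
    rw [Finset.sum_comm (f := fun z m => qJ z m * Real.logb 2 (qJ z m)),
      Finset.sum_comm (f := fun z s => pJ z s * Real.logb 2 (pJ z s)),
      ← Finset.sum_sub_distrib, ← Finset.sum_sub_distrib,
      Finset.sum_congr rfl (fun m _ => key m), h1]
  simp only [hpZdef, hpSdef, hpJdef, hpMdef, hqJdef] at total
  unfold mutInf entH
  rw [Fintype.sum_prod_type, Fintype.sum_prod_type]
  linarith [total]
end

section
/- Let p ∈ [0,1] and Γ₀, Γ₁, Γ_X ∈ (0,1) be real numbers. Define Φ(n) = p·Γ₀ⁿ + (1−p)·Γ₁ⁿ for n ∈ ℕ, μ = (1 − Γ_X·Γ₀)(1 − Γ_X·Γ₁) / ( p·(1 − Γ_X·Γ₁) + (1−p)·(1 − Γ_X·Γ₀) ), and π_n = μ·Γ_Xⁿ·Φ(n). Then: (i) 0 < Γ_X·Φ(n+1)/Φ(n) < 1 for every n; (ii) Σ_{n=0}^{∞} π_n = 1; (iii) π_{n+1} = π_n · Γ_X·Φ(n+1)/Φ(n) for every n; and (iv) π_0 = Σ_{n=0}^{∞} π_n · ( 1 − Γ_X·Φ(n+1)/Φ(n)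 ). Hence π is the stationary distribution of the Markov chain on ℕ in which state n moves to n+1 with probability Γ_X·Φ(n+1)/Φ(n) and resets to 0 with the complementary probability. -/
/-- The stationary distribution of the temporally coarse-grained stochastic reset clock.
With `Φ(n) = p·Γ₀ⁿ + (1−p)·Γ₁ⁿ`,
`μ = (1 − Γ_X Γ₀)(1 − Γ_X Γ₁)/(p(1 − Γ_X Γ₁) + (1−p)(1 − Γ_X Γ₀))` and
`π_n = μ·Γ_Xⁿ·Φ(n)`: (i) the transition probability `Γ_X·Φ(n+1)/Φ(n)` lies in `(0,1)`;
(ii) `π` sums to `1`; (iii) `π_{n+1} = π_n · Γ_X·Φ(n+1)/Φ(n)`; and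
(iv) `π₀ = Σₙ π_n·(1 − Γ_X·Φ(n+1)/Φ(n))`.  Hence `π` is stationary for the Markov
chain where state `n` moves to `n+1` with probability `Γ_X·Φ(n+1)/Φ(n)` and resets
to `0` with the complementary probability. -/
theorem reset_clock_stationary_distribution
    (p Γ₀ Γ₁ ΓX : ℝ) (hp0 : 0 ≤ p) (hp1 : p ≤ 1)
    (hΓ₀ : Γ₀ ∈ Set.Ioo (0 : ℝ) 1) (hΓ₁ : Γ₁ ∈ Set.Ioo (0 : ℝ) 1)
    (hΓX : ΓX ∈ Set.Ioo (0 : ℝ) 1)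
    (Φ : ℕ → ℝ) (hΦ : ∀ n, Φ n = p * Γ₀ ^ n + (1 - p) * Γ₁ ^ n)
    (μ : ℝ) (hμ : μ = (1 - ΓX * Γ₀) * (1 - ΓX * Γ₁) /
      (p * (1 - ΓX * Γ₁) + (1 - p) * (1 - ΓX * Γ₀)))
    (π : ℕ → ℝ) (hπ : ∀ n, π n = μ * ΓX ^ n * Φ n) :
    (∀ n : ℕ, 0 < ΓX * Φ (n + 1) / Φ n ∧ ΓX * Φ (n + 1) / Φ n < 1) ∧
    HasSum π 1 ∧
    (∀ n : ℕ, π (n + 1) = π n * (ΓX * Φ (n + 1) / Φ n)) ∧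
    HasSum (fun n : ℕ => π n * (1 - ΓX * Φ (n + 1) / Φ n)) (π 0) := by

  obtain ⟨hX0, hX1⟩ := hΓX
  obtain ⟨h00, h01⟩ := hΓ₀
  obtain ⟨h10, h11⟩ := hΓ₁
  have hΦpos : ∀ n, 0 < Φ n := by
    intro n
    rw [hΦ]
    rcases lt_or_eq_of_le hp0 with h | h
    · nlinarith [mul_pos h (pow_pos h00 n),
        mul_nonneg (by linarith : (0:ℝ) ≤ 1 - p) (pow_pos h10 n).le]
    · rw [← h]; simpa using pow_pos h10 n
  have hdec : ∀ n, ΓX * Φ (n + 1) < Φ n := by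
    intro n
    have h1 : Φ (n + 1) ≤ Φ n := by
      rw [hΦ, hΦ]
      simp only [pow_succ]
      nlinarith [mul_nonneg (mul_nonneg hp0 (pow_pos h00 n).le)
          (by linarith : (0:ℝ) ≤ 1 - Γ₀),
        mul_nonneg (mul_nonneg (by linarith : (0:ℝ) ≤ 1 - p) (pow_pos h10 n).le)
          (by linarith : (0:ℝ) ≤ 1 - Γ₁)]
    calc ΓX * Φ (n + 1) ≤ ΓX * Φ n := by
          exact mul_le_mul_of_nonneg_left h1 hX0.le
      _ < Φ n := by nlinarith [hΦpos n]
  have hA : ΓX * Γ₀ < 1 := by nlinarith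
  have hB : ΓX * Γ₁ < 1 := by nlinarith
  have hA0 : (1 - ΓX * Γ₀) ≠ 0 := (by linarith : (0:ℝ) < 1 - ΓX * Γ₀).ne'
  have hB0 : (1 - ΓX * Γ₁) ≠ 0 := (by linarith : (0:ℝ) < 1 - ΓX * Γ₁).ne'
  have hD : 0 < p * (1 - ΓX * Γ₁) + (1 - p) * (1 - ΓX * Γ₀) := by
    rcases lt_or_eq_of_le hp0 with h | h
    · nlinarith [mul_pos h (by linarith : (0:ℝ) < 1 - ΓX * Γ₁),
        mul_nonneg (by linarith : (0:ℝ) ≤ 1 - p) (by linarith : (0:ℝ) ≤ 1 - ΓX * Γ₀)]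
    · rw [← h]; nlinarith
  have hiii : ∀ n : ℕ, π (n + 1) = π n * (ΓX * Φ (n + 1) / Φ n) := by
    intro n
    have hn := (hΦpos n).ne'
    rw [hπ, hπ]
    field_simp
    ring
  have hsum : HasSum π 1 := by
    have hg0 : HasSum (fun n : ℕ => μ * p * (ΓX * Γ₀) ^ n)
        (μ * p * (1 - ΓX * Γ₀)⁻¹) :=
      (hasSum_geometric_of_lt_one (by positivity) hA).mul_left _
    have hg1 : HasSum (fun n : ℕ => μ * (1 - p) * (ΓX * Γ₁) ^ n)
        (μ * (1 - p) * (1 - ΓX * Γ₁)⁻¹) :=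
      (hasSum_geometric_of_lt_one (by positivity) hB).mul_left _
    have h := hg0.add hg1
    have heq : (fun n : ℕ => μ * p * (ΓX * Γ₀) ^ n + μ * (1 - p) * (ΓX * Γ₁) ^ n) = π := by
      funext n
      rw [hπ, hΦ, mul_pow, mul_pow]
      ring
    rw [heq] at h
    convert h using 1
    rw [hμ]
    have hD0 := hD.ne'
    generalize hDD : p * (1 - ΓX * Γ₁) + (1 - p) * (1 - ΓX * Γ₀) = D at hD0 ⊢
    field_simp
    rw [← hDD]
    ring
  refine ⟨fun n => ⟨div_pos (mul_pos hX0 (hΦpos _)) (hΦpos n), ?_⟩, hsum, hiii, ?_⟩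
  · rw [div_lt_one (hΦpos n)]
    exact hdec n
  · have hshift : HasSum (fun n : ℕ => π (n + 1)) (1 - π 0) := by
      have h := (hasSum_nat_add_iff' (f := π) (g := (1:ℝ)) 1).mpr hsum
      simpa using h
    have h := hsum.sub hshift
    have heq : (fun n : ℕ => π n - π (n + 1)) =
        (fun n : ℕ => π n * (1 - ΓX * Φ (n + 1) / Φ n)) := by
      funext n
      rw [hiii n]
      ring
    rw [heq] at h
    simpa using h
end

section
/- Let Z and I be finite nonempty sets, let (P(z))_{z∈Z} be a probability vector with P(z) > 0 for all z, for each z let (Q(i|z))_{i∈I} be a probability vector with Q(i|z) > 0 for all i, and set Q(i) = Σ_{z∈Z} P(z)·Q(i|z). Let (σ_i)_{i∈I} be vectors in a complex inner product space. Suppose that for every m ∈ I and every z ∈ Z, Σ_{i≠m} ( log Q(i|z) − log Q(i) )·|⟨σ_i, σ_m⟩|² = 0. Then for every i ∈ I, either ⟨σ_i, σ_m⟩ = 0 for all m ≠ i, or Q(i|z) = Q(i) for all z ∈ Z. (This is the dichotomy concluding the forward direction of Result 2: every causal state's quantum encoding is either perfectly distinguishable from all others, or the record z carries no information about that causal state.)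 -/
open Finset

/-- Dichotomy concluding the forward direction of Result 2.  With `P` a positive
probability vector over records `z`, `Q(·|z)` positive conditional distributions over
causal-state indices `i`, and `Q(i) = Σ_z P(z)·Q(i|z)`: if for every `m` and every `z`
`Σ_{i≠m} (log Q(i|z) − log Q(i))·|⟨σ_i, σ_m⟩|² = 0`, then each index `i` satisfies
either `⟨σ_i, σ_m⟩ = 0` for all `m ≠ i` (perfect distinguishability), or
`Q(i|z) = Q(i)` for all `z` (the record carries no information about `i`). -/
theorem causal_state_dichotomy
    {E 𝒵 ι : Type*} [NormedAddCommGroup E] [InnerProductSpace ℂ E]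
    [Fintype 𝒵] [Nonempty 𝒵] [Fintype ι] [Nonempty ι] [DecidableEq ι]
    (P : 𝒵 → ℝ) (hP : ∀ z, 0 < P z) (hP1 : ∑ z, P z = 1)
    (Q : ι → 𝒵 → ℝ) (hQ : ∀ i z, 0 < Q i z) (hQ1 : ∀ z, ∑ i, Q i z = 1)
    (σ : ι → E)
    (h : ∀ (m : ι) (z : 𝒵), ∑ i ∈ Finset.univ.erase m,
      (Real.log (Q i z) - Real.log (∑ z', P z' * Q i z')) *
        ‖(inner ℂ (σ i) (σ m) : ℂ)‖ ^ 2 = 0) :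
    ∀ i : ι, (∀ m : ι, m ≠ i → (inner ℂ (σ i) (σ m) : ℂ) = 0) ∨
      (∀ z : 𝒵, Q i z = ∑ z', P z' * Q i z') := by
  set Qb : ι → ℝ := fun i => ∑ z', P z' * Q i z' with hQb
  have hQbpos : ∀ i, 0 < Qb i := fun i =>
    Finset.sum_pos (fun z _ => mul_pos (hP z) (hQ i z)) Finset.univ_nonempty
  set a : ι → ℝ := fun i => ∑ z, P z * (Real.log (Q i z) - Real.log (Qb i)) with ha
  have hterm : ∀ i z, Real.log (Q i z) - Real.log (Qb i) ≤ Q i z / Qb i - 1 := by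
    intro i z
    have := Real.log_le_sub_one_of_pos (div_pos (hQ i z) (hQbpos i))
    rwa [Real.log_div (hQ i z).ne' (hQbpos i).ne'] at this
  have hsumRHS : ∀ i, ∑ z, P z * (Q i z / Qb i - 1) = 0 := by
    intro i
    simp only [mul_sub, mul_one]
    rw [Finset.sum_sub_distrib]
    simp only [← mul_div_assoc]
    rw [← Finset.sum_div]
    have hb : (∑ z, P z * Q i z) = Qb i := rfl
    rw [hb, div_self (hQbpos i).ne', hP1]; ring
  have hale : ∀ i, a i ≤ 0 := by
    intro i
    calc a i ≤ ∑ z, P z * (Q i z / Qb i - 1) :=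
          Finset.sum_le_sum fun z _ => mul_le_mul_of_nonneg_left (hterm i z) (hP z).le
      _ = 0 := hsumRHS i
  have haeq : ∀ i, a i = 0 → ∀ z, Q i z = Qb i := by
    intro i hai z
    by_contra hne
    have hx : Q i z / Qb i ≠ 1 := fun h1 =>
      hne ((div_eq_one_iff_eq (hQbpos i).ne').1 h1)
    have hlt : Real.log (Q i z) - Real.log (Qb i) < Q i z / Qb i - 1 := by
      have := Real.log_lt_sub_one_of_pos (div_pos (hQ i z) (hQbpos i)) hx
      rwa [Real.log_div (hQ i z).ne' (hQbpos i).ne'] at this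
    have hlt2 : a i < ∑ z, P z * (Q i z / Qb i - 1) := by
      apply Finset.sum_lt_sum (fun w _ => mul_le_mul_of_nonneg_left (hterm i w) (hP w).le)
      exact ⟨z, Finset.mem_univ z, (mul_lt_mul_iff_right₀ (hP z)).2 hlt⟩
    rw [hsumRHS i] at hlt2; linarith
  have hav : ∀ m : ι, ∑ i ∈ Finset.univ.erase m,
      a i * ‖(inner ℂ (σ i) (σ m) : ℂ)‖ ^ 2 = 0 := by
    intro m
    have key : ∀ i, a i * ‖(inner ℂ (σ i) (σ m) : ℂ)‖ ^ 2 =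
        ∑ z, P z * ((Real.log (Q i z) - Real.log (Qb i)) * ‖(inner ℂ (σ i) (σ m) : ℂ)‖ ^ 2) := by
      intro i
      rw [ha]; simp only
      rw [Finset.sum_mul]
      exact Finset.sum_congr rfl fun z _ => by ring
    calc ∑ i ∈ Finset.univ.erase m, a i * ‖(inner ℂ (σ i) (σ m) : ℂ)‖ ^ 2
        = ∑ i ∈ Finset.univ.erase m, ∑ z, P z *
            ((Real.log (Q i z) - Real.log (Qb i)) * ‖(inner ℂ (σ i) (σ m) : ℂ)‖ ^ 2) :=
          Finset.sum_congr rfl fun i _ => key i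
      _ = ∑ z, ∑ i ∈ Finset.univ.erase m, P z *
            ((Real.log (Q i z) - Real.log (Qb i)) * ‖(inner ℂ (σ i) (σ m) : ℂ)‖ ^ 2) :=
          Finset.sum_comm
      _ = ∑ z, P z * ∑ i ∈ Finset.univ.erase m,
            ((Real.log (Q i z) - Real.log (Qb i)) * ‖(inner ℂ (σ i) (σ m) : ℂ)‖ ^ 2) := by
          exact Finset.sum_congr rfl fun z _ => (Finset.mul_sum _ _ _).symm
      _ = 0 := by
          refine Finset.sum_eq_zero fun z _ => ?_
          rw [h m z, mul_zero]
  have hzero : ∀ m : ι, ∀ i ∈ Finset.univ.erase m,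
      a i * ‖(inner ℂ (σ i) (σ m) : ℂ)‖ ^ 2 = 0 := by
    intro m
    have hnp : ∀ i ∈ Finset.univ.erase m,
        a i * ‖(inner ℂ (σ i) (σ m) : ℂ)‖ ^ 2 ≤ (fun _ : ι => (0:ℝ)) i :=
      fun i _ => mul_nonpos_of_nonpos_of_nonneg (hale i) (by positivity)
    intro i hi
    by_contra hne
    have hlt : a i * ‖(inner ℂ (σ i) (σ m) : ℂ)‖ ^ 2 < 0 := lt_of_le_of_ne (hnp i hi) hne
    have hs : ∑ j ∈ Finset.univ.erase m, a j * ‖(inner ℂ (σ j) (σ m) : ℂ)‖ ^ 2 <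
        ∑ _j ∈ Finset.univ.erase m, (0:ℝ) :=
      Finset.sum_lt_sum hnp ⟨i, hi, hlt⟩
    rw [Finset.sum_const_zero] at hs
    exact absurd (hav m) hs.ne
  intro i
  by_cases hai : a i = 0
  · exact Or.inr (haeq i hai)
  · left
    intro m hm
    have hi : i ∈ Finset.univ.erase m := Finset.mem_erase.2 ⟨hm.symm, Finset.mem_univ i⟩
    rcases mul_eq_zero.1 (hzero m i hi) with h1 | h2
    · exact absurd h1 hai
    · simpa using pow_eq_zero_iff (n := 2) (by norm_num) |>.1 h2
end
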